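/- Let (P, ·, [−,…,−]) be a Poisson n-Lie algebra and (B, ∘) a commutative associative algebra. Then the tensor product P ⊗ B, equipped with component-wise multiplication (x⊗y)·(x'⊗y') = (x·x')⊗(y∘y') and the n-ary bracket [x₁⊗y₁,…,xₙ⊗yₙ] = [x₁,…,xₙ]⊗(y₁∘⋯∘yₙ), is a Poisson n-Lie algebra. -/

import Mathlib

open scoped TensorProduct
open Function

section Aux

variable {F P B Q : Type*} [Field F] [AddCommGroup P] [Module F P]
  [AddCommGroup B] [Module F B] [AddCommGroup Q]

/-- A function on families in a tensor product which is additive in each slot and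
vanishes on families of pure tensors vanishes everywhere. -/
theorem auxExt : ∀ (k : ℕ) (h : (Fin k → P ⊗[F] B) → Q),
    (∀ (v : Fin k → P ⊗[F] B) (i : Fin k) (a b : P ⊗[F] B),
      h (update v i (a + b)) = h (update v i a) + h (update v i b)) →
    (∀ (x : Fin k → P) (y : Fin k → B), h (fun i => x i ⊗ₜ[F] y i) = 0) →
    ∀ v, h v = 0 := by
  intro k
  induction k with
  | zero =>
    intro h _ hpure v
    have hv : v = fun i => (fun i : Fin 0 => i.elim0) i ⊗ₜ[F] (fun i : Fin 0 => i.elim0) i :=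
      funext fun i => i.elim0
    rw [hv]; exact hpure _ _
  | succ k ih =>
    intro h hadd hpure v
    have key : ∀ (a : P ⊗[F] B) (w : Fin k → P ⊗[F] B), h (Fin.cons a w) = 0 := by
      intro a
      induction a using TensorProduct.induction_on with
      | zero =>
        intro w
        have h2 := hadd (Fin.cons 0 w) 0 0 0
        rw [Fin.update_cons_zero, Fin.update_cons_zero, add_zero] at h2
        exact right_eq_add.mp h2
      | tmul x y =>
        intro w
        refine ih (fun w => h (Fin.cons (x ⊗ₜ[F] y) w)) ?_ ?_ w
        · intro w i a b
          simp only [Fin.cons_update]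
          exact hadd _ _ _ _
        · intro X Y
          have hE : (Fin.cons (x ⊗ₜ[F] y) (fun i => X i ⊗ₜ[F] Y i) : Fin (k+1) → P ⊗[F] B)
              = fun i => (Fin.cons x X : Fin (k+1) → P) i ⊗ₜ[F] (Fin.cons y Y : Fin (k+1) → B) i := by
            funext i
            induction i using Fin.cases <;> simp
          show h (Fin.cons (x ⊗ₜ[F] y) (fun i => X i ⊗ₜ[F] Y i)) = 0
          rw [hE]; exact hpure _ _
      | add a b ha hb =>
        intro w
        have h2 := hadd (Fin.cons a w) 0 a b
        rw [Fin.update_cons_zero, Fin.update_cons_zero, Fin.update_cons_zero] at h2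
        rw [h2, ha, hb, add_zero]
    have := key (v 0) (Fin.tail v)
    rwa [Fin.cons_self_tail] at this

end Aux
section Ext

variable {F P B : Type*} [Field F] [CommRing P] [Algebra F P] [CommRing B] [Algebra F B]

/-- Extension of a multilinear map on `P` to `P ⊗ B`, with the product of the `B`-components. -/
noncomputable def extAux (F P B : Type*) [Field F] [CommRing P] [Algebra F P]
    [CommRing B] [Algebra F B] :
    ∀ k : ℕ,
      { E : MultilinearMap F (fun _ : Fin k => P) P →ₗ[F]
            MultilinearMap F (fun _ : Fin k => P ⊗[F] B) (P ⊗[F] B) //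
        ∀ (f : MultilinearMap F (fun _ : Fin k => P) P) (x : Fin k → P) (y : Fin k → B),
          E f (fun i => x i ⊗ₜ[F] y i) = f x ⊗ₜ[F] ∏ i, y i }
  | 0 =>
    ⟨{ toFun := fun f =>
        MultilinearMap.constOfIsEmpty F _ (f (fun i => i.elim0) ⊗ₜ[F] (1 : B))
       map_add' := by
         intro f g
         ext v
         simp [TensorProduct.add_tmul]
       map_smul' := by
         intro c f
         ext v
         simp [TensorProduct.smul_tmul'] },
      by
        intro f x y
        show (f fun i => i.elim0) ⊗ₜ[F] (1 : B) = f x ⊗ₜ[F] ∏ i, y i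
        rw [Subsingleton.elim (fun i : Fin 0 => i.elim0) x, Finset.univ_eq_empty,
          Finset.prod_empty]⟩
  | (k + 1) => by
    obtain ⟨E, hE⟩ := extAux F P B k
    set step : MultilinearMap F (fun _ : Fin (k+1) => P) P →
        (P →ₗ[F] B →ₗ[F] MultilinearMap F (fun _ : Fin k => P ⊗[F] B) (P ⊗[F] B)) :=
      fun f => LinearMap.mk₂ F
        (fun (x : P) (y : B) =>
          (LinearMap.mulLeft F ((1:P) ⊗ₜ[F] y)).compMultilinearMap (E (f.curryLeft x)))
        (by intro x₁ x₂ y; ext z; simp [mul_add])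
        (by intro c x y; ext z
            simp only [map_smul, LinearMap.compMultilinearMap_apply, MultilinearMap.smul_apply,
              LinearMap.mulLeft_apply, LinearMap.smul_apply]
            try rw [mul_smul_comm])
        (by intro x y₁ y₂; ext z; simp [TensorProduct.tmul_add, add_mul])
        (by intro c x y; ext z; simp [smul_mul_assoc]) with hstep
    set EF : MultilinearMap F (fun _ : Fin (k+1) => P) P →
        MultilinearMap F (fun _ : Fin (k+1) => P ⊗[F] B) (P ⊗[F] B) :=
      fun f => LinearMap.uncurryLeft (TensorProduct.lift (step f)) with hEF
    have htmul : ∀ (f : MultilinearMap F (fun _ : Fin (k+1) => P) P)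
        (x : Fin (k+1) → P) (y : Fin (k+1) → B),
        EF f (fun i => x i ⊗ₜ[F] y i) = f x ⊗ₜ[F] ∏ i, y i := by
      intro f x y
      show TensorProduct.lift (step f) (x 0 ⊗ₜ[F] y 0)
          (Fin.tail fun i => x i ⊗ₜ[F] y i) = _
      have htail : (Fin.tail fun i => x i ⊗ₜ[F] y i)
          = fun i : Fin k => Fin.tail x i ⊗ₜ[F] Fin.tail y i := rfl
      rw [htail, TensorProduct.lift.tmul]
      rw [hstep]
      simp only [LinearMap.mk₂_apply, LinearMap.compMultilinearMap_apply,
        LinearMap.mulLeft_apply]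
      rw [hE]
      rw [Algebra.TensorProduct.tmul_mul_tmul, one_mul, MultilinearMap.curryLeft_apply,
        Fin.cons_self_tail]
      rw [Fin.prod_univ_succ]
      rfl
    refine ⟨{ toFun := EF
              map_add' := ?_
              map_smul' := ?_ }, htmul⟩
    · intro f g
      ext v
      have h0 := auxExt (F := F) (P := P) (B := B) (k+1)
        (fun v => EF (f + g) v - EF f v - EF g v) ?hadd ?hpure v
      · rw [sub_sub, sub_eq_zero] at h0
        simpa using h0
      case hadd =>
        intro v i a b
        simp only [MultilinearMap.map_update_add]
        abel
      case hpure =>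
        intro x y
        simp [htmul, TensorProduct.add_tmul]
    · intro c f
      ext v
      have h0 := auxExt (F := F) (P := P) (B := B) (k+1)
        (fun v => EF (c • f) v - c • EF f v) ?hadd ?hpure v
      · rw [sub_eq_zero] at h0
        simpa using h0
      case hadd =>
        intro v i a b
        simp only [MultilinearMap.map_update_add, smul_add]
        abel
      case hpure =>
        intro x y
        simp [htmul, TensorProduct.smul_tmul']

end Ext
section Props

variable {F P B : Type*} [Field F] [CommRing P] [Algebra F P] [CommRing B] [Algebra F B]
  {m : ℕ}

/-- The extended bracket on the tensor product, as a multilinear map. -/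
noncomputable def brTM (br : AlternatingMap F P P (Fin (m+2))) :
    MultilinearMap F (fun _ : Fin (m+2) => P ⊗[F] B) (P ⊗[F] B) :=
  (extAux F P B (m+2)).1 br.toMultilinearMap

theorem brTM_tmul (br : AlternatingMap F P P (Fin (m+2)))
    (x : Fin (m+2) → P) (y : Fin (m+2) → B) :
    brTM (B := B) br (fun i => x i ⊗ₜ[F] y i) = br x ⊗ₜ[F] ∏ i, y i :=
  (extAux F P B (m+2)).2 br.toMultilinearMap x y

theorem update_comp_swap {α β : Type*} [DecidableEq α] {i j : α} (hij : i ≠ j)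
    (v : α → β) (a b : β) :
    (update (update v i a) j b) ∘ Equiv.swap i j = update (update v i b) j a := by
  funext k
  rcases eq_or_ne k i with rfl | hki
  · show (update (update v k a) j b) (Equiv.swap k j k) = _
    rw [Equiv.swap_apply_left, Function.update_self, Function.update_of_ne hij,
      Function.update_self]
  · rcases eq_or_ne k j with rfl | hkj
    · show (update (update v i a) k b) (Equiv.swap i k k) = _
      rw [Equiv.swap_apply_right, Function.update_of_ne hij, Function.update_self,
        Function.update_self]
    · show (update (update v i a) j b) (Equiv.swap i j k) = _
      rw [Equiv.swap_apply_of_ne_of_ne hki hkj, Function.update_of_ne hkj,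
        Function.update_of_ne hki, Function.update_of_ne hkj, Function.update_of_ne hki]

theorem brTM_swap (br : AlternatingMap F P P (Fin (m+2))) {i j : Fin (m+2)} (hij : i ≠ j)
    (v : Fin (m+2) → P ⊗[F] B) :
    brTM (B := B) br (v ∘ Equiv.swap i j) + brTM (B := B) br v = 0 := by
  refine auxExt (m+2) (fun v => brTM (B := B) br (v ∘ Equiv.swap i j) + brTM (B := B) br v)
    ?_ ?_ v
  · intro v l a b
    have hc : ∀ c : P ⊗[F] B, (update v l c) ∘ Equiv.swap i j
        = update (v ∘ Equiv.swap i j) (Equiv.swap i j l) c := by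
      intro c; funext kk
      by_cases hk : kk = Equiv.swap i j l
      · subst hk
        show update v l c (Equiv.swap i j (Equiv.swap i j l)) = _
        rw [Equiv.swap_apply_self, Function.update_self, Function.update_self]
      · have h2 : Equiv.swap i j kk ≠ l := by
          intro h; apply hk; rw [← h, Equiv.swap_apply_self]
        show update v l c (Equiv.swap i j kk) = _
        rw [Function.update_of_ne h2, Function.update_of_ne hk]
        rfl
    simp only [hc]
    rw [MultilinearMap.map_update_add, MultilinearMap.map_update_add]
    abel
  · intro x y
    have h1 : ((fun i => x i ⊗ₜ[F] y i) ∘ Equiv.swap i j)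
        = fun k => (x ∘ Equiv.swap i j) k ⊗ₜ[F] (y ∘ Equiv.swap i j) k := rfl
    show brTM (B := B) br ((fun i => x i ⊗ₜ[F] y i) ∘ Equiv.swap i j) + _ = 0
    rw [h1, brTM_tmul, brTM_tmul]
    have h2 : ∏ k, (y ∘ Equiv.swap i j) k = ∏ k, y k := by
      simpa [Function.comp] using Equiv.prod_comp (Equiv.swap i j) y
    have h3 : br (x ∘ Equiv.swap i j) = - br x := br.map_swap x hij
    rw [h2, h3, TensorProduct.neg_tmul, neg_add_cancel]

theorem brTM_diag_pure (br : AlternatingMap F P P (Fin (m+2))) {i j : Fin (m+2)} (hij : i ≠ j)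
    (x : P) (y : B) :
    ∀ (s : Finset (Fin (m+2))) (v : Fin (m+2) → P ⊗[F] B),
      (∀ k, k ∉ s → k ≠ i → k ≠ j → ∃ p q, v k = p ⊗ₜ[F] q) →
      brTM (B := B) br (update (update v i (x ⊗ₜ[F] y)) j (x ⊗ₜ[F] y)) = 0 := by
  intro s
  induction s using Finset.induction_on with
  | empty =>
    intro v hv
    choose p q hpq using fun k (h1 : k ≠ i) (h2 : k ≠ j) =>
      hv k (Finset.notMem_empty k) h1 h2
    set X : Fin (m+2) → P := fun k =>
      if h1 : k = i then x else if h2 : k = j then x else p k h1 h2 with hX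
    set Y : Fin (m+2) → B := fun k =>
      if h1 : k = i then y else if h2 : k = j then y else q k h1 h2 with hY
    have hfam : update (update v i (x ⊗ₜ[F] y)) j (x ⊗ₜ[F] y) = fun k => X k ⊗ₜ[F] Y k := by
      funext k
      rcases eq_or_ne k j with rfl | hkj
      · simp [hX, hY, Function.update_self, hij.symm]
      · rcases eq_or_ne k i with rfl | hki
        · simp [hX, hY, Function.update_of_ne hkj, Function.update_self]
        · rw [Function.update_of_ne hkj, Function.update_of_ne hki]
          simp [hX, hY, hki, hkj, hpq k hki hkj]
    rw [hfam, brTM_tmul]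
    have hXij : X i = X j := by simp [hX, hij.symm]
    rw [br.map_eq_zero_of_eq X hXij hij, TensorProduct.zero_tmul]
  | @insert k₀ s hk₀ ih =>
    intro v hv
    rcases eq_or_ne k₀ i with rfl | hki
    · exact ih v (fun k hk h1 h2 => hv k (by simp [Finset.mem_insert]; tauto) h1 h2)
    rcases eq_or_ne k₀ j with rfl | hkj
    · exact ih v (fun k hk h1 h2 => hv k (by simp [Finset.mem_insert]; tauto) h1 h2)
    have key : ∀ a : P ⊗[F] B,
        brTM (B := B) br (update (update (update v k₀ a) i (x ⊗ₜ[F] y)) j (x ⊗ₜ[F] y)) = 0 := by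
      have hcomm : ∀ a : P ⊗[F] B, update (update (update v k₀ a) i (x ⊗ₜ[F] y)) j (x ⊗ₜ[F] y)
          = update (update (update v i (x ⊗ₜ[F] y)) j (x ⊗ₜ[F] y)) k₀ a := by
        intro a
        rw [Function.update_comm hki, Function.update_comm hkj]
      intro a
      induction a using TensorProduct.induction_on with
      | zero => rw [hcomm]; exact MultilinearMap.map_update_zero _ _ _
      | tmul p q =>
        refine ih (update v k₀ (p ⊗ₜ[F] q)) ?_
        intro k hk h1 h2
        rcases eq_or_ne k k₀ with rfl | hkk
        · exact ⟨p, q, Function.update_self _ _ _⟩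
        · rw [Function.update_of_ne hkk]
          exact hv k (by simp [Finset.mem_insert, hkk, hk]) h1 h2
      | add a b ha hb =>
        rw [hcomm, MultilinearMap.map_update_add, ← hcomm a, ← hcomm b, ha, hb, add_zero]
    have := key (v k₀)
    rwa [Function.update_eq_self] at this

theorem brTM_alt (br : AlternatingMap F P P (Fin (m+2)))
    (v : Fin (m+2) → P ⊗[F] B) (i j : Fin (m+2)) (hv : v i = v j) (hij : i ≠ j) :
    brTM (B := B) br v = 0 := by
  suffices key : ∀ a : P ⊗[F] B, brTM (B := B) br (update (update v i a) j a) = 0 by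
    have := key (v i)
    rwa [Function.update_eq_self, hv, Function.update_eq_self] at this
  intro a
  induction a using TensorProduct.induction_on with
  | zero => exact MultilinearMap.map_update_zero _ _ _
  | tmul x y =>
    exact brTM_diag_pure br hij x y Finset.univ v
      (fun k hk _ _ => absurd (Finset.mem_univ k) hk)
  | add a b ha hb =>
    have hT : ∀ c d : P ⊗[F] B,
        brTM (B := B) br (update (update v i c) j d)
          + brTM (B := B) br (update (update v i d) j c) = 0 := by
      intro c d
      have := brTM_swap (B := B) br hij (update (update v i d) j c)
      rwa [update_comp_swap hij] at this
    have e1 : brTM (B := B) br (update (update v i (a+b)) j (a+b))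
        = brTM (B := B) br (update (update v i (a+b)) j a)
          + brTM (B := B) br (update (update v i (a+b)) j b) :=
      MultilinearMap.map_update_add _ _ _ _ _
    have e2 : ∀ c, brTM (B := B) br (update (update v i (a+b)) j c)
        = brTM (B := B) br (update (update v i a) j c)
          + brTM (B := B) br (update (update v i b) j c) := by
      intro c
      rw [Function.update_comm hij, MultilinearMap.map_update_add,
        Function.update_comm hij.symm, Function.update_comm hij.symm]
    rw [e1, e2 a, e2 b, ha, hb]
    linear_combination hT a b

end Props
section FI

variable {F P B : Type*} [Field F] [CommRing P] [Algebra F P] [CommRing B] [Algebra F B]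
  {m : ℕ} (br : AlternatingMap F P P (Fin (m+2)))

theorem brTM_FI_pure
    (hFI : ∀ (x : Fin (m + 1) → P) (y : Fin (m + 2) → P),
      br (Fin.snoc x (br y)) = ∑ i, br (update y i (br (Fin.snoc x (y i)))))
    (p : Fin (m+1) → P) (q : Fin (m+1) → B) (s : Fin (m+2) → P) (t : Fin (m+2) → B) :
    brTM (B := B) br (Fin.snoc (fun l => p l ⊗ₜ[F] q l)
        (brTM (B := B) br (fun i => s i ⊗ₜ[F] t i)))
      = ∑ i, brTM (B := B) br (update (fun k => s k ⊗ₜ[F] t k) i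
          (brTM (B := B) br (Fin.snoc (fun l => p l ⊗ₜ[F] q l) (s i ⊗ₜ[F] t i)))) := by
  have hsnoc : ∀ (c : P) (d : B),
      (Fin.snoc (fun l => p l ⊗ₜ[F] q l) (c ⊗ₜ[F] d) : Fin (m+2) → P ⊗[F] B)
        = fun l => (Fin.snoc p c : Fin (m+2) → P) l ⊗ₜ[F] (Fin.snoc q d : Fin (m+2) → B) l := by
    intro c d; funext l
    induction l using Fin.lastCases with
    | last => simp
    | cast l => simp
  have hupd : ∀ (i : Fin (m+2)) (c : P) (d : B),
      update (fun k => s k ⊗ₜ[F] t k) i (c ⊗ₜ[F] d)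
        = fun k => update s i c k ⊗ₜ[F] update t i d k := by
    intro i c d; funext k
    rcases eq_or_ne k i with rfl | hk
    · simp
    · simp [Function.update_of_ne hk]
  rw [brTM_tmul br s t, hsnoc, brTM_tmul, Fin.prod_snoc, hFI p s, TensorProduct.sum_tmul]
  refine Finset.sum_congr rfl ?_
  intro i _
  rw [hsnoc, brTM_tmul, Fin.prod_snoc, hupd, brTM_tmul]
  congr 1
  rw [Finset.prod_update_of_mem (Finset.mem_univ i), Finset.sdiff_singleton_eq_erase,
    mul_assoc, Finset.mul_prod_erase Finset.univ t (Finset.mem_univ i)]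

theorem brTM_FI_pureX
    (hFI : ∀ (x : Fin (m + 1) → P) (y : Fin (m + 2) → P),
      br (Fin.snoc x (br y)) = ∑ i, br (update y i (br (Fin.snoc x (y i)))))
    (p : Fin (m+1) → P) (q : Fin (m+1) → B) (y : Fin (m+2) → P ⊗[F] B) :
    brTM (B := B) br (Fin.snoc (fun l => p l ⊗ₜ[F] q l) (brTM (B := B) br y))
      = ∑ i, brTM (B := B) br (update y i
          (brTM (B := B) br (Fin.snoc (fun l => p l ⊗ₜ[F] q l) (y i)))) := by
  set px : Fin (m+1) → P ⊗[F] B := fun l => p l ⊗ₜ[F] q l with hpx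
  have L : ∀ c : P ⊗[F] B, brTM (B := B) br (Fin.snoc px c)
      = brTM (B := B) br (update (Fin.snoc px 0) (Fin.last (m+1)) c) := by
    intro c; rw [Fin.update_snoc_last]
  have Ladd : ∀ c d : P ⊗[F] B, brTM (B := B) br (Fin.snoc px (c+d))
      = brTM (B := B) br (Fin.snoc px c) + brTM (B := B) br (Fin.snoc px d) := by
    intro c d; rw [L (c+d), MultilinearMap.map_update_add, ← L c, ← L d]
  have h0 := auxExt (m+2) (fun y => brTM (B := B) br (Fin.snoc px (brTM (B := B) br y))
      - ∑ i, brTM (B := B) br (update y i (brTM (B := B) br (Fin.snoc px (y i)))))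
      ?hadd ?hpure y
  · exact sub_eq_zero.mp h0
  case hadd =>
    intro y l a b
    have hterm : ∀ i, brTM (B := B) br (update (update y l (a+b)) i
          (brTM (B := B) br (Fin.snoc px ((update y l (a+b)) i))))
        = brTM (B := B) br (update (update y l a) i
            (brTM (B := B) br (Fin.snoc px ((update y l a) i))))
          + brTM (B := B) br (update (update y l b) i
              (brTM (B := B) br (Fin.snoc px ((update y l b) i)))) := by
      intro i
      rcases eq_or_ne i l with rfl | hil
      · simp only [Function.update_self, Function.update_idem]
        rw [Ladd, MultilinearMap.map_update_add]
      · simp only [Function.update_of_ne hil]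
        simp only [Function.update_comm hil.symm]
        exact MultilinearMap.map_update_add _ _ _ _ _
    have hsum : (∑ i, brTM (B := B) br (update (update y l (a+b)) i
          (brTM (B := B) br (Fin.snoc px ((update y l (a+b)) i)))))
        = (∑ i, brTM (B := B) br (update (update y l a) i
            (brTM (B := B) br (Fin.snoc px ((update y l a) i)))))
          + (∑ i, brTM (B := B) br (update (update y l b) i
              (brTM (B := B) br (Fin.snoc px ((update y l b) i))))) := by
      rw [← Finset.sum_add_distrib]
      exact Finset.sum_congr rfl fun i _ => hterm i
    rw [MultilinearMap.map_update_add, Ladd, hsum]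
    abel
  case hpure =>
    intro X Y
    simp only
    rw [brTM_FI_pure br hFI p q X Y, sub_self]

theorem brTM_FI
    (hFI : ∀ (x : Fin (m + 1) → P) (y : Fin (m + 2) → P),
      br (Fin.snoc x (br y)) = ∑ i, br (update y i (br (Fin.snoc x (y i)))))
    (x : Fin (m+1) → P ⊗[F] B) (y : Fin (m+2) → P ⊗[F] B) :
    brTM (B := B) br (Fin.snoc x (brTM (B := B) br y))
      = ∑ i, brTM (B := B) br (update y i (brTM (B := B) br (Fin.snoc x (y i)))) := by
  have h0 := auxExt (m+1) (fun x => brTM (B := B) br (Fin.snoc x (brTM (B := B) br y))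
      - ∑ i, brTM (B := B) br (update y i (brTM (B := B) br (Fin.snoc x (y i)))))
      ?hadd ?hpure x
  · exact sub_eq_zero.mp h0
  case hadd =>
    intro x l a b
    have hL : ∀ w : P ⊗[F] B, brTM (B := B) br (Fin.snoc (update x l (a+b)) w)
        = brTM (B := B) br (Fin.snoc (update x l a) w)
          + brTM (B := B) br (Fin.snoc (update x l b) w) := by
      intro w
      simp only [Fin.snoc_update]
      exact MultilinearMap.map_update_add _ _ _ _ _
    have hsum : (∑ i, brTM (B := B) br (update y i
          (brTM (B := B) br (Fin.snoc (update x l (a+b)) (y i)))))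
        = (∑ i, brTM (B := B) br (update y i
            (brTM (B := B) br (Fin.snoc (update x l a) (y i)))))
          + (∑ i, brTM (B := B) br (update y i
              (brTM (B := B) br (Fin.snoc (update x l b) (y i))))) := by
      rw [← Finset.sum_add_distrib]
      refine Finset.sum_congr rfl fun i _ => ?_
      rw [hL (y i), MultilinearMap.map_update_add]
    rw [hL, hsum]
    abel
  case hpure =>
    intro X Y
    rw [brTM_FI_pureX br hFI X Y y, sub_self]

end FI

section Leib

variable {F P B : Type*} [Field F] [CommRing P] [Algebra F P] [CommRing B] [Algebra F B]
  {m : ℕ} (br : AlternatingMap F P P (Fin (m+2)))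

theorem brTM_Leib_pure
    (hLeib : ∀ (u v : P) (x : Fin (m + 1) → P),
      br (Fin.cons (u * v) x) = u * br (Fin.cons v x) + v * br (Fin.cons u x))
    (p p' : P) (q q' : B) (s : Fin (m+1) → P) (t : Fin (m+1) → B) :
    brTM (B := B) br (Fin.cons ((p ⊗ₜ[F] q) * (p' ⊗ₜ[F] q')) (fun l => s l ⊗ₜ[F] t l))
      = (p ⊗ₜ[F] q) * brTM (B := B) br (Fin.cons (p' ⊗ₜ[F] q') (fun l => s l ⊗ₜ[F] t l))
        + (p' ⊗ₜ[F] q') * brTM (B := B) br (Fin.cons (p ⊗ₜ[F] q) (fun l => s l ⊗ₜ[F] t l)) := by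
  have hcons : ∀ (c : P) (d : B),
      (Fin.cons (c ⊗ₜ[F] d) (fun l => s l ⊗ₜ[F] t l) : Fin (m+2) → P ⊗[F] B)
        = fun k => (Fin.cons c s : Fin (m+2) → P) k ⊗ₜ[F] (Fin.cons d t : Fin (m+2) → B) k := by
    intro c d; funext k
    induction k using Fin.cases <;> simp
  rw [Algebra.TensorProduct.tmul_mul_tmul, hcons, hcons, hcons, brTM_tmul, brTM_tmul,
    brTM_tmul, Fin.prod_cons, Fin.prod_cons, Fin.prod_cons, hLeib p p' s,
    TensorProduct.add_tmul, Algebra.TensorProduct.tmul_mul_tmul,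
    Algebra.TensorProduct.tmul_mul_tmul]
  congr 1
  · congr 1; ring
  · congr 1; ring

theorem brTM_Leib_pureX
    (hLeib : ∀ (u v : P) (x : Fin (m + 1) → P),
      br (Fin.cons (u * v) x) = u * br (Fin.cons v x) + v * br (Fin.cons u x))
    (s : Fin (m+1) → P) (t : Fin (m+1) → B) (u v : P ⊗[F] B) :
    brTM (B := B) br (Fin.cons (u * v) (fun l => s l ⊗ₜ[F] t l))
      = u * brTM (B := B) br (Fin.cons v (fun l => s l ⊗ₜ[F] t l))
        + v * brTM (B := B) br (Fin.cons u (fun l => s l ⊗ₜ[F] t l)) := by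
  set px : Fin (m+1) → P ⊗[F] B := fun l => s l ⊗ₜ[F] t l with hpx
  have hc : ∀ c : P ⊗[F] B, (Fin.cons c px : Fin (m+2) → P ⊗[F] B)
      = update (Fin.cons 0 px) 0 c := by
    intro c; rw [Fin.update_cons_zero]
  have Czero : brTM (B := B) br (Fin.cons (0 : P ⊗[F] B) px) = 0 := by
    rw [hc]; exact MultilinearMap.map_update_zero _ _ _
  have Cadd : ∀ c d : P ⊗[F] B, brTM (B := B) br (Fin.cons (c + d) px)
      = brTM (B := B) br (Fin.cons c px) + brTM (B := B) br (Fin.cons d px) := by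
    intro c d; rw [hc (c+d), MultilinearMap.map_update_add, ← hc c, ← hc d]
  induction u using TensorProduct.induction_on with
  | zero => simp [Czero]
  | add u₁ u₂ h1 h2 =>
    rw [add_mul, Cadd, Cadd, h1, h2]; ring
  | tmul pp qq =>
    induction v using TensorProduct.induction_on with
    | zero => simp [Czero]
    | add v₁ v₂ g1 g2 =>
      rw [mul_add, Cadd, Cadd, g1, g2]; ring
    | tmul pp' qq' => exact brTM_Leib_pure br hLeib pp pp' qq qq' s t

theorem brTM_Leib
    (hLeib : ∀ (u v : P) (x : Fin (m + 1) → P),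
      br (Fin.cons (u * v) x) = u * br (Fin.cons v x) + v * br (Fin.cons u x))
    (u v : P ⊗[F] B) (x : Fin (m+1) → P ⊗[F] B) :
    brTM (B := B) br (Fin.cons (u * v) x)
      = u * brTM (B := B) br (Fin.cons v x) + v * brTM (B := B) br (Fin.cons u x) := by
  have h0 := auxExt (m+1) (fun x => brTM (B := B) br (Fin.cons (u * v) x)
      - u * brTM (B := B) br (Fin.cons v x) - v * brTM (B := B) br (Fin.cons u x))
      ?hadd ?hpure x
  · rw [sub_sub, sub_eq_zero] at h0
    exact h0
  case hadd =>
    intro x l a b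
    simp only [Fin.cons_update, MultilinearMap.map_update_add]
    ring
  case hpure =>
    intro X Y
    rw [brTM_Leib_pureX br hLeib X Y u v, sub_sub, sub_self]

end Leib
/-- The tensor product of a Poisson `n`-Lie algebra with a commutative
associative algebra is a Poisson `n`-Lie algebra, with component-wise
multiplication and bracket `[x₁⊗y₁,…,xₙ⊗yₙ] = [x₁,…,xₙ] ⊗ (y₁∘⋯∘yₙ)`.
Here the arity is `n = m + 2`. -/
theorem tensor_poisson_nLie
    (F P B : Type*) [Field F] [CommRing P] [Algebra F P]
    [CommRing B] [Algebra F B] (m : ℕ)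
    (br : AlternatingMap F P P (Fin (m + 2)))
    (hFI : ∀ (x : Fin (m + 1) → P) (y : Fin (m + 2) → P),
      br (Fin.snoc x (br y)) =
        ∑ i, br (Function.update y i (br (Fin.snoc x (y i)))))
    (hLeib : ∀ (u v : P) (x : Fin (m + 1) → P),
      br (Fin.cons (u * v) x) = u * br (Fin.cons v x) + v * br (Fin.cons u x)) :
    ∃ brT : AlternatingMap F (P ⊗[F] B) (P ⊗[F] B) (Fin (m + 2)),
      (∀ (x : Fin (m + 2) → P) (y : Fin (m + 2) → B),
        brT (fun i => x i ⊗ₜ[F] y i) = br x ⊗ₜ[F] (∏ i, y i)) ∧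
      (∀ (x : Fin (m + 1) → P ⊗[F] B) (y : Fin (m + 2) → P ⊗[F] B),
        brT (Fin.snoc x (brT y)) =
          ∑ i, brT (Function.update y i (brT (Fin.snoc x (y i))))) ∧
      (∀ (u v : P ⊗[F] B) (x : Fin (m + 1) → P ⊗[F] B),
        brT (Fin.cons (u * v) x) =
          u * brT (Fin.cons v x) + v * brT (Fin.cons u x)) := by
  refine ⟨{ toMultilinearMap := brTM (B := B) br
            map_eq_zero_of_eq' := fun v i j h hij => brTM_alt br v i j h hij }, ?_, ?_, ?_⟩
  · intro x y
    exact brTM_tmul br x y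
  · intro x y
    exact brTM_FI br hFI x y
  · intro u v x
    exact brTM_Leib br hLeib u v x
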